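/- The classes of the variables T_{ij} in R(A,𝔫,L) are K-prime elements, and for (i,j) ≠ (k,l) the classes of T_{ij} and T_{kl} are not associated in R(A,𝔫,L). -/

import Mathlib

open MvPolynomial

section Setup

variable (𝕂 : Type) [Field 𝕂] [IsAlgClosed 𝕂] [CharZero 𝕂]
variable (r : ℕ) (a : Fin (r+1) → 𝕂 × 𝕂) (n : Fin (r+1) → ℕ)
variable (l : ∀ i : Fin (r+1), Fin (n i) → ℕ)

/-- The index set of the variables `T_{ij}`, `0 ≤ i ≤ r`, `1 ≤ j ≤ n_i`. -/
abbrev Idx (r : ℕ) (n : Fin (r+1) → ℕ) := Σ i : Fin (r+1), Fin (n i)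

/-- The monomial `T_i^{l_i} = T_{i1}^{l_{i1}} ⋯ T_{i n_i}^{l_{i n_i}}`. -/
noncomputable def mono (i : Fin (r+1)) : MvPolynomial (Idx r n) 𝕂 :=
  ∏ j : Fin (n i), (X ⟨i, j⟩ : MvPolynomial (Idx r n) 𝕂) ^ l i j

/-- `α_{ij} = det(a_i, a_j)`. -/
def alpha (i k : Fin (r+1)) : 𝕂 := (a i).1 * (a k).2 - (a k).1 * (a i).2

/-- The trinomial `g_{i,j,k} = α_{jk} T_i^{l_i} + α_{ki} T_j^{l_j} + α_{ij} T_k^{l_k}`. -/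
noncomputable def gPoly (i j k : Fin (r+1)) : MvPolynomial (Idx r n) 𝕂 :=
  C (alpha 𝕂 r a j k) * mono 𝕂 r n l i + C (alpha 𝕂 r a k i) * mono 𝕂 r n l j +
    C (alpha 𝕂 r a i j) * mono 𝕂 r n l k

/-- The ideal `⟨g_{i,i+1,i+2} ; 0 ≤ i ≤ r-2⟩`. -/
noncomputable def relIdeal : Ideal (MvPolynomial (Idx r n) 𝕂) :=
  Ideal.span { p | ∃ i j k : Fin (r+1), (j : ℕ) = (i : ℕ) + 1 ∧ (k : ℕ) = (i : ℕ) + 2 ∧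
    p = gPoly 𝕂 r a n l i j k }

/-- The ring `R(A, 𝔫, L)`. -/
abbrev RAnL := MvPolynomial (Idx r n) 𝕂 ⧸ relIdeal 𝕂 r a n l

/-- Row `i` (for `1 ≤ i ≤ r`) of the `r × n` matrix `P`. -/
def Prow (i : Fin r) : Idx r n → ℤ :=
  fun x => if x.1 = 0 then -(l x.1 x.2 : ℤ) else if x.1 = i.succ then (l x.1 x.2 : ℤ) else 0

/-- The subgroup of `ℤ^n` generated by the rows of `P`. -/
def rowSpan : AddSubgroup (Idx r n → ℤ) := AddSubgroup.closure (Set.range (Prow r n l))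

/-- The grading group `K = ℤ^n / P^*(M)`. -/
abbrev Kgrp := (Idx r n → ℤ) ⧸ rowSpan r n l

/-- The projection `Q : ℤ^n → K`. -/
noncomputable def Qmap : (Idx r n → ℤ) →+ Kgrp r n l := QuotientAddGroup.mk' (rowSpan r n l)

/-- The weight `deg T_{ij} := Q(e_{ij})` defining the `K`-grading of `S`. -/
noncomputable def wK : Idx r n → Kgrp r n l := fun x => Qmap r n l (Pi.single x (1 : ℤ))

/-- An element of `R(A,𝔫,L)` is homogeneous of degree `d` if it is the image of a
`K`-homogeneous polynomial of degree `d`. -/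
def IsHomog (d : Kgrp r n l) (y : RAnL 𝕂 r a n l) : Prop :=
  ∃ p : MvPolynomial (Idx r n) 𝕂, p.IsWeightedHomogeneous (wK r n l) d ∧
    Ideal.Quotient.mk (relIdeal 𝕂 r a n l) p = y

/-- `K`-prime elements of `R(A,𝔫,L)`. -/
def KPrime (f : RAnL 𝕂 r a n l) : Prop :=
  (∃ d, IsHomog 𝕂 r a n l d f) ∧ f ≠ 0 ∧ ¬ IsUnit f ∧
    ∀ x y : RAnL 𝕂 r a n l, (∃ d, IsHomog 𝕂 r a n l d x) → (∃ d, IsHomog 𝕂 r a n l d y) →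
      f ∣ x * y → f ∣ x ∨ f ∣ y

end Setup

set_option linter.unusedSectionVars false

section Aux

variable {𝕂 : Type} [Field 𝕂] [IsAlgClosed 𝕂] [CharZero 𝕂]
variable {r : ℕ} {a : Fin (r+1) → 𝕂 × 𝕂} {n : Fin (r+1) → ℕ}
variable {l : ∀ i : Fin (r+1), Fin (n i) → ℕ}

lemma alpha_self (i : Fin (r+1)) : alpha 𝕂 r a i i = 0 := by simp [alpha]

lemma alpha_ne_zero (ha : ∀ i k : Fin (r+1), i ≠ k → LinearIndependent 𝕂 ![a i, a k])
    {i k : Fin (r+1)} (h : i ≠ k) : alpha 𝕂 r a i k ≠ 0 := by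
  intro h0
  simp only [alpha] at h0
  have hli := (ha i k h)
  rw [LinearIndependent.pair_iff] at hli
  have h1 := hli ((a k).2) (-(a i).2) (by
    apply Prod.ext
    · simp; linear_combination h0
    · simp; ring)
  have h2 := hli ((a k).1) (-(a i).1) (by
    apply Prod.ext
    · simp; ring
    · simp; linear_combination -h0)
  have h3 := hli 0 1 (by
    have : a k = 0 := Prod.ext h2.1 h1.1
    simp [this])
  exact one_ne_zero h3.2

lemma star_identity (u v i j k : Fin (r+1)) :
    C (alpha 𝕂 r a u v) * gPoly 𝕂 r a n l i j k =
      C (alpha 𝕂 r a j k) * gPoly 𝕂 r a n l u v i +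
      C (alpha 𝕂 r a k i) * gPoly 𝕂 r a n l u v j +
      C (alpha 𝕂 r a i j) * gPoly 𝕂 r a n l u v k := by
  have h1 : (C (alpha 𝕂 r a j k * alpha 𝕂 r a v i + alpha 𝕂 r a k i * alpha 𝕂 r a v j
      + alpha 𝕂 r a i j * alpha 𝕂 r a v k) : MvPolynomial (Idx r n) 𝕂) = 0 := by
    have : alpha 𝕂 r a j k * alpha 𝕂 r a v i + alpha 𝕂 r a k i * alpha 𝕂 r a v j
      + alpha 𝕂 r a i j * alpha 𝕂 r a v k = 0 := by simp only [alpha]; ring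
    rw [this, map_zero]
  have h2 : (C (alpha 𝕂 r a j k * alpha 𝕂 r a i u + alpha 𝕂 r a k i * alpha 𝕂 r a j u
      + alpha 𝕂 r a i j * alpha 𝕂 r a k u) : MvPolynomial (Idx r n) 𝕂) = 0 := by
    have : alpha 𝕂 r a j k * alpha 𝕂 r a i u + alpha 𝕂 r a k i * alpha 𝕂 r a j u
      + alpha 𝕂 r a i j * alpha 𝕂 r a k u = 0 := by simp only [alpha]; ring
    rw [this, map_zero]
  simp only [map_add, map_mul] at h1 h2
  simp only [gPoly]
  linear_combination (-(mono 𝕂 r n l u)) * h1 + (-(mono 𝕂 r n l v)) * h2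

lemma gPoly_degen1 (u v : Fin (r+1)) : gPoly 𝕂 r a n l u v u = 0 := by
  have hC : (C (alpha 𝕂 r a v u) + C (alpha 𝕂 r a u v) : MvPolynomial (Idx r n) 𝕂) = 0 := by
    rw [← map_add]
    have : alpha 𝕂 r a v u + alpha 𝕂 r a u v = 0 := by simp only [alpha]; ring
    rw [this, map_zero]
  simp only [gPoly, alpha_self, map_zero, zero_mul, add_zero]
  linear_combination (mono 𝕂 r n l u) * hC

lemma gPoly_degen2 (u v : Fin (r+1)) : gPoly 𝕂 r a n l u v v = 0 := by
  have hC : (C (alpha 𝕂 r a v u) + C (alpha 𝕂 r a u v) : MvPolynomial (Idx r n) 𝕂) = 0 := by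
    rw [← map_add]
    have : alpha 𝕂 r a v u + alpha 𝕂 r a u v = 0 := by simp only [alpha]; ring
    rw [this, map_zero]
  simp only [gPoly, alpha_self, map_zero, zero_mul, add_zero, zero_add]
  linear_combination (mono 𝕂 r n l v) * hC

lemma mem_of_C_mul {I : Ideal (MvPolynomial (Idx r n) 𝕂)} {c : 𝕂} (hc : c ≠ 0)
    {p : MvPolynomial (Idx r n) 𝕂} (h : C c * p ∈ I) : p ∈ I := by
  have h2 := I.mul_mem_left (C c⁻¹) h
  rwa [← mul_assoc, ← map_mul, inv_mul_cancel₀ hc, map_one, one_mul] at h2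

lemma one_fin_val (hr : 1 ≤ r) : ((1 : Fin (r+1)) : ℕ) = 1 := by
  rw [Fin.val_one']
  exact Nat.mod_eq_of_lt (by omega)

lemma zero_ne_one_fin (hr : 1 ≤ r) : (0 : Fin (r+1)) ≠ 1 := by
  intro h
  have h2 := congrArg Fin.val h
  rw [Fin.val_zero, one_fin_val hr] at h2
  omega

lemma g01_mem (hr : 1 ≤ r)
    (ha : ∀ i k : Fin (r+1), i ≠ k → LinearIndependent 𝕂 ![a i, a k]) : ∀ m : ℕ, ∀ hm : m < r+1,
    gPoly 𝕂 r a n l 0 1 ⟨m, hm⟩ ∈ relIdeal 𝕂 r a n l := by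
  intro m
  induction m using Nat.strong_induction_on with
  | _ m ih =>
    intro hm
    match m, hm with
    | 0, hm => rw [show (⟨0, hm⟩ : Fin (r+1)) = 0 from rfl, gPoly_degen1]; exact zero_mem _
    | 1, hm =>
        rw [show (⟨1, hm⟩ : Fin (r+1)) = 1 from Fin.ext (by rw [one_fin_val hr]), gPoly_degen2]
        exact zero_mem _
    | 2, hm =>
        exact Ideal.subset_span ⟨0, 1, ⟨2, hm⟩, by rw [one_fin_val hr, Fin.val_zero], rfl, rfl⟩
    | (m+3), hm =>
        have hi1 : m+1 < r+1 := by omega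
        have hi2 : m+2 < r+1 := by omega
        have hgen : gPoly 𝕂 r a n l ⟨m+1, hi1⟩ ⟨m+2, hi2⟩ ⟨m+3, hm⟩ ∈ relIdeal 𝕂 r a n l :=
          Ideal.subset_span ⟨⟨m+1, hi1⟩, ⟨m+2, hi2⟩, ⟨m+3, hm⟩, rfl, rfl, rfl⟩
        have hi := ih (m+1) (by omega) hi1
        have hj := ih (m+2) (by omega) hi2
        have hstar := star_identity (a := a) (n := n) (l := l) 0 1 ⟨m+1, hi1⟩ ⟨m+2, hi2⟩ ⟨m+3, hm⟩
        have key : C (alpha 𝕂 r a ⟨m+1, hi1⟩ ⟨m+2, hi2⟩) * gPoly 𝕂 r a n l 0 1 ⟨m+3, hm⟩ =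
            C (alpha 𝕂 r a 0 1) * gPoly 𝕂 r a n l ⟨m+1, hi1⟩ ⟨m+2, hi2⟩ ⟨m+3, hm⟩
            - C (alpha 𝕂 r a ⟨m+2, hi2⟩ ⟨m+3, hm⟩) * gPoly 𝕂 r a n l 0 1 ⟨m+1, hi1⟩
            - C (alpha 𝕂 r a ⟨m+3, hm⟩ ⟨m+1, hi1⟩) * gPoly 𝕂 r a n l 0 1 ⟨m+2, hi2⟩ := by
          linear_combination -hstar
        have hne : (⟨m+1, hi1⟩ : Fin (r+1)) ≠ ⟨m+2, hi2⟩ := Fin.ne_of_val_ne (by simp)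
        apply mem_of_C_mul (alpha_ne_zero ha hne)
        rw [key]
        exact sub_mem (sub_mem (Ideal.mul_mem_left _ _ hgen) (Ideal.mul_mem_left _ _ hi))
          (Ideal.mul_mem_left _ _ hj)

lemma g_mem (hr : 1 ≤ r)
    (ha : ∀ i k : Fin (r+1), i ≠ k → LinearIndependent 𝕂 ![a i, a k])
    (i j k : Fin (r+1)) : gPoly 𝕂 r a n l i j k ∈ relIdeal 𝕂 r a n l := by
  apply mem_of_C_mul (alpha_ne_zero ha (zero_ne_one_fin hr))
  rw [star_identity]
  exact add_mem (add_mem (Ideal.mul_mem_left _ _ (g01_mem hr ha i.val i.isLt))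
    (Ideal.mul_mem_left _ _ (g01_mem hr ha j.val j.isLt)))
    (Ideal.mul_mem_left _ _ (g01_mem hr ha k.val k.isLt))

end Aux
section Aux2

set_option linter.unusedSectionVars false

variable {𝕂 : Type} [Field 𝕂] [IsAlgClosed 𝕂] [CharZero 𝕂]
variable {r : ℕ} {a : Fin (r+1) → 𝕂 × 𝕂} {n : Fin (r+1) → ℕ}
variable {l : ∀ i : Fin (r+1), Fin (n i) → ℕ}

/-- The exponent vector of the block monomial `T_i^{l_i}`. -/
noncomputable def blkF (n : Fin (r+1) → ℕ) (l : ∀ i : Fin (r+1), Fin (n i) → ℕ)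
    (i : Fin (r+1)) : Idx r n →₀ ℕ :=
  ∑ j : Fin (n i), Finsupp.single ⟨i, j⟩ (l i j)

lemma blkF_apply_same (i : Fin (r+1)) (j : Fin (n i)) : blkF n l i ⟨i, j⟩ = l i j := by
  classical
  rw [blkF, Finset.sum_apply']
  have h : ∀ j' : Fin (n i), Finsupp.single (⟨i, j'⟩ : Idx r n) (l i j') ⟨i, j⟩
      = if j' = j then l i j' else 0 := by
    intro j'
    rw [Finsupp.single_apply]
    congr 1
    simp [Sigma.mk.inj_iff]
  simp only [h]
  simp
  
lemma blkF_apply_ne {i : Fin (r+1)} {v : Idx r n} (h : v.1 ≠ i) : blkF n l i v = 0 := by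
  classical
  rw [blkF, Finset.sum_apply']
  apply Finset.sum_eq_zero
  intro j' _
  rw [Finsupp.single_apply, if_neg]
  intro he
  exact h (congrArg Sigma.fst he).symm

lemma mono_eq_monomial (i : Fin (r+1)) :
    mono 𝕂 r n l i = monomial (blkF n l i) (1 : 𝕂) := by
  rw [mono, blkF, monomial_sum_one]
  exact Finset.prod_congr rfl fun j _ => X_pow_eq_monomial

lemma eval_mono (t : Idx r n → 𝕂) (i : Fin (r+1)) :
    eval t (mono 𝕂 r n l i) = ∏ j : Fin (n i), t ⟨i, j⟩ ^ l i j := by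
  rw [mono]
  simp

lemma eval_gPoly (t : Idx r n → 𝕂) (i j k : Fin (r+1)) :
    eval t (gPoly 𝕂 r a n l i j k) =
      alpha 𝕂 r a j k * eval t (mono 𝕂 r n l i) + alpha 𝕂 r a k i * eval t (mono 𝕂 r n l j)
        + alpha 𝕂 r a i j * eval t (mono 𝕂 r n l k) := by
  rw [gPoly]
  simp

lemma relIdeal_le_ker {t : Idx r n → 𝕂}
    (h : ∀ i j k : Fin (r+1), eval t (gPoly 𝕂 r a n l i j k) = 0) {p : MvPolynomial (Idx r n) 𝕂}
    (hp : p ∈ relIdeal 𝕂 r a n l) : eval t p = 0 := by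
  have hle : relIdeal 𝕂 r a n l ≤ RingHom.ker (eval t) := by
    rw [relIdeal, Ideal.span_le]
    rintro p ⟨i, j, k, hj, hk, rfl⟩
    exact h i j k
  exact hle hp

end Aux2
section Aux3

set_option linter.unusedSectionVars false

variable {𝕂 : Type} [Field 𝕂] [IsAlgClosed 𝕂] [CharZero 𝕂]
variable {r : ℕ} {a : Fin (r+1) → 𝕂 × 𝕂} {n : Fin (r+1) → ℕ}
variable {l : ∀ i : Fin (r+1), Fin (n i) → ℕ}

lemma a_ne_zero (hr : 1 ≤ r)
    (ha : ∀ i k : Fin (r+1), i ≠ k → LinearIndependent 𝕂 ![a i, a k])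
    (i : Fin (r+1)) : a i ≠ 0 := by
  have hex : ∃ k : Fin (r+1), i ≠ k := by
    by_cases h0 : i = 0
    · exact ⟨1, by rw [h0]; exact zero_ne_one_fin hr⟩
    · exact ⟨0, h0⟩
  obtain ⟨k, hk⟩ := hex
  have := (ha i k hk).ne_zero 0
  simpa using this

lemma prod_block (t : Idx r n → 𝕂) (hn : ∀ i, 0 < n i) (i : Fin (r+1)) (z : 𝕂)
    (h1 : t ⟨i, ⟨0, hn i⟩⟩ = z) (h2 : ∀ j : Fin (n i), j ≠ ⟨0, hn i⟩ → t ⟨i, j⟩ = 1) :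
    (∏ j : Fin (n i), t ⟨i, j⟩ ^ l i j) = z ^ l i ⟨0, hn i⟩ := by
  calc (∏ j : Fin (n i), t ⟨i, j⟩ ^ l i j) = t ⟨i, ⟨0, hn i⟩⟩ ^ l i ⟨0, hn i⟩ :=
        Finset.prod_eq_single_of_mem _ (Finset.mem_univ _)
          (fun b _ hb => by rw [h2 b hb, one_pow])
    _ = z ^ l i ⟨0, hn i⟩ := by rw [h1]

lemma exists_degenerate_point (hn : ∀ i, 0 < n i) (hl : ∀ i j, 0 < l i j)
    (ha : ∀ i k : Fin (r+1), i ≠ k → LinearIndependent 𝕂 ![a i, a k]) (x : Idx r n) :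
    ∃ t : Idx r n → 𝕂, (∀ i, eval t (mono 𝕂 r n l i) = alpha 𝕂 r a x.1 i) ∧ t x = 0 ∧
      (∀ v, v ≠ x → t v ≠ 0) ∧ ∀ p ∈ relIdeal 𝕂 r a n l, eval t p = 0 := by
  classical
  obtain ⟨i0, jx⟩ := x
  have hρ : ∀ i : Fin (r+1), ∃ z : 𝕂, z ^ (l i ⟨0, hn i⟩) = alpha 𝕂 r a i0 i := fun i =>
    IsAlgClosed.exists_pow_nat_eq _ (hl i _)
  choose ρ hρspec using hρ
  set t : Idx r n → 𝕂 := fun v => if v.1 = i0 then (if v = ⟨i0, jx⟩ then 0 else 1)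
    else (if v.2 = ⟨0, hn v.1⟩ then ρ v.1 else 1) with ht
  have hm : ∀ i, eval t (mono 𝕂 r n l i) = alpha 𝕂 r a i0 i := by
    intro i
    rw [eval_mono]
    by_cases hi : i = i0
    · subst hi
      rw [alpha_self]
      apply Finset.prod_eq_zero (Finset.mem_univ jx)
      have h0 : t ⟨i, jx⟩ = 0 := by simp [ht]
      rw [h0, zero_pow (hl i jx).ne']
    · rw [show alpha 𝕂 r a i0 i = ρ i ^ (l i ⟨0, hn i⟩) from (hρspec i).symm]
      apply prod_block t hn i (ρ i)
      · simp [ht, hi]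
      · intro j hj
        simp [ht, hi, hj]
  refine ⟨t, hm, by simp [ht], ?_, ?_⟩
  · intro v hv
    rw [ht]
    simp only
    by_cases h1 : v.1 = i0
    · rw [if_pos h1, if_neg hv]; exact one_ne_zero
    · rw [if_neg h1]
      by_cases h2 : v.2 = ⟨0, hn v.1⟩
      · rw [if_pos h2]
        intro hz
        have hsp := hρspec v.1
        rw [hz, zero_pow (hl v.1 _).ne'] at hsp
        exact alpha_ne_zero ha (fun he => h1 he.symm) hsp.symm
      · rw [if_neg h2]; exact one_ne_zero
  · intro p hp
    apply relIdeal_le_ker (fun i j k => ?_) hp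
    rw [eval_gPoly, hm, hm, hm]
    simp only [alpha]
    ring

lemma exists_global_point (hr : 1 ≤ r) (hn : ∀ i, 0 < n i) (hl : ∀ i j, 0 < l i j)
    (ha : ∀ i k : Fin (r+1), i ≠ k → LinearIndependent 𝕂 ![a i, a k]) :
    ∃ t : Idx r n → 𝕂, (∀ v, t v ≠ 0) ∧ ∀ p ∈ relIdeal 𝕂 r a n l, eval t p = 0 := by
  classical
  obtain ⟨v₀, hv₀⟩ := Infinite.exists_notMem_finset
    (insert (0 : 𝕂) (Finset.image (fun i => -(a i).1 / (a i).2) Finset.univ))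
  set ξ : Fin (r+1) → 𝕂 := fun i => (a i).1 + (a i).2 * v₀ with hξ
  have hξne : ∀ i, ξ i ≠ 0 := by
    intro i h0
    simp only [hξ] at h0
    by_cases hc : (a i).2 = 0
    · rw [hc, zero_mul, add_zero] at h0
      exact a_ne_zero hr ha i (Prod.ext h0 hc)
    · apply hv₀
      apply Finset.mem_insert_of_mem
      apply Finset.mem_image.mpr ⟨i, Finset.mem_univ i, ?_⟩
      field_simp
      linear_combination -h0
  have hρ : ∀ i : Fin (r+1), ∃ z : 𝕂, z ^ (l i ⟨0, hn i⟩) = ξ i := fun i =>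
    IsAlgClosed.exists_pow_nat_eq _ (hl i _)
  choose ρ hρspec using hρ
  set t : Idx r n → 𝕂 := fun v => if v.2 = ⟨0, hn v.1⟩ then ρ v.1 else 1 with ht
  have hm : ∀ i, eval t (mono 𝕂 r n l i) = ξ i := by
    intro i
    rw [eval_mono, show ξ i = ρ i ^ (l i ⟨0, hn i⟩) from (hρspec i).symm]
    apply prod_block t hn i (ρ i)
    · simp [ht]
    · intro j hj
      simp [ht, hj]
  refine ⟨t, ?_, ?_⟩
  · intro v
    rw [ht]
    simp only
    by_cases h2 : v.2 = ⟨0, hn v.1⟩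
    · rw [if_pos h2]
      intro hz
      have hsp := hρspec v.1
      rw [hz, zero_pow (hl v.1 _).ne'] at hsp
      exact hξne v.1 hsp.symm
    · rw [if_neg h2]; exact one_ne_zero
  · intro p hp
    apply relIdeal_le_ker (fun i j k => ?_) hp
    rw [eval_gPoly, hm, hm, hm]
    simp only [hξ, alpha]
    ring

end Aux3
section Aux4

set_option linter.unusedSectionVars false

variable {𝕂 : Type} [Field 𝕂] [IsAlgClosed 𝕂] [CharZero 𝕂]
variable {r : ℕ} {a : Fin (r+1) → 𝕂 × 𝕂} {n : Fin (r+1) → ℕ}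
variable {l : ∀ i : Fin (r+1), Fin (n i) → ℕ}

lemma weight_eq_Qmap (μ : Idx r n →₀ ℕ) :
    Finsupp.weight (wK r n l) μ = Qmap r n l (fun v => (μ v : ℤ)) := by
  classical
  rw [Finsupp.weight_apply]
  have h1 : (μ.sum fun v e => e • wK r n l v)
      = Qmap r n l (μ.sum fun v e => e • Pi.single v (1 : ℤ)) := by
    rw [map_finsuppSum]
    apply Finsupp.sum_congr
    intro v _
    rw [map_nsmul]
    rfl
  rw [h1]
  congr 1
  funext u
  simp only [Finsupp.sum, Finset.sum_apply]
  have h2 : ∀ v, (((μ v) • Pi.single v (1 : ℤ) : Idx r n → ℤ)) u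
      = if u = v then (μ v : ℤ) else 0 := by
    intro v
    rw [Pi.smul_apply, Pi.single_apply]
    split <;> simp
  simp only [h2]
  rw [Finset.sum_ite_eq]
  split
  · rfl
  · next h => rw [Finsupp.notMem_support_iff.mp h]; rfl

lemma exists_m {μ ν : Idx r n →₀ ℕ}
    (hdeg : Finsupp.weight (wK r n l) μ = Finsupp.weight (wK r n l) ν) :
    ∃ m : Fin (r+1) → ℤ, (∑ k, m k = 0) ∧
      ∀ v : Idx r n, (μ v : ℤ) - (ν v : ℤ) = m v.1 * l v.1 v.2 := by
  classical
  have h0 : Qmap r n l (fun v => (μ v : ℤ)) = Qmap r n l (fun v => (ν v : ℤ)) := by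
    rw [← weight_eq_Qmap, ← weight_eq_Qmap, hdeg]
  rw [Qmap, QuotientAddGroup.mk'_eq_mk'] at h0
  obtain ⟨z, hz, hxz⟩ := h0
  have hmem : ((fun v => (μ v : ℤ)) - fun v => (ν v : ℤ)) ∈ rowSpan r n l := by
    have : ((fun v => (μ v : ℤ)) - fun v => (ν v : ℤ)) = -z := by
      rw [← hxz]; abel
    rw [this]
    exact neg_mem hz
  rw [rowSpan, ← Submodule.span_int_eq_addSubgroupClosure, Submodule.mem_toAddSubgroup,
    Submodule.mem_span_range_iff_exists_fun] at hmem
  obtain ⟨c, hc⟩ := hmem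
  refine ⟨Fin.cases (-∑ i, c i) c, ?_, ?_⟩
  · rw [Fin.sum_univ_succ, Fin.cases_zero]
    simp only [Fin.cases_succ]
    ring
  · suffices h : ∀ v1 : Fin (r+1), ∀ v2 : Fin (n v1), (μ ⟨v1, v2⟩ : ℤ) - (ν ⟨v1, v2⟩ : ℤ)
        = (Fin.cases (-∑ i, c i) c : ∀ _ : Fin (r+1), ℤ) v1 * l v1 v2 by
      intro v
      obtain ⟨v1, v2⟩ := v
      exact h v1 v2
    have hc' : ∀ v : Idx r n, (∑ i, c i * Prow r n l i v) = (μ v : ℤ) - ν v := by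
      intro v
      have := congrFun hc v
      simpa [Finset.sum_apply] using this
    intro v1
    induction v1 using Fin.cases with
    | zero =>
      intro v2
      rw [← hc' ⟨0, v2⟩]
      simp only [Fin.cases_zero]
      have : ∀ i : Fin r, c i * Prow r n l i ⟨0, v2⟩ = c i * (-(l 0 v2 : ℤ)) := by
        intro i
        rw [Prow]
        norm_num
      rw [Finset.sum_congr rfl (fun i _ => this i)]
      rw [← Finset.sum_mul]
      ring
    | succ k =>
      intro v2
      rw [← hc' ⟨k.succ, v2⟩]
      simp only [Fin.cases_succ]
      have : ∀ i : Fin r, c i * Prow r n l i ⟨k.succ, v2⟩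
          = if k = i then c i * (l k.succ v2 : ℤ) else 0 := by
        intro i
        rw [Prow]
        simp only []
        rw [if_neg (by exact_mod_cast Fin.succ_ne_zero k)]
        simp only [mul_ite, mul_zero, Fin.succ_inj]
      rw [Finset.sum_congr rfl (fun i _ => this i), Finset.sum_ite_eq]
      simp

end Aux4
section Aux5

set_option linter.unusedSectionVars false

variable {𝕂 : Type} [Field 𝕂] [IsAlgClosed 𝕂] [CharZero 𝕂]
variable {r : ℕ} {a : Fin (r+1) → 𝕂 × 𝕂} {n : Fin (r+1) → ℕ}
variable {l : ∀ i : Fin (r+1), Fin (n i) → ℕ}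

lemma X_eq_monomial' (x : Idx r n) :
    (X x : MvPolynomial (Idx r n) 𝕂) = monomial (Finsupp.single x 1) 1 := by
  rw [← X_pow_eq_monomial, pow_one]

lemma X_dvd_monomial'' {d : Idx r n →₀ ℕ} {x : Idx r n} (h : d x ≠ 0) (c : 𝕂) :
    X x ∣ monomial d c := by
  refine ⟨monomial (d - Finsupp.single x 1) c, ?_⟩
  rw [X_eq_monomial', monomial_mul, one_mul]
  congr 1
  rw [add_tsub_cancel_of_le (Finsupp.single_le_iff.mpr (Nat.one_le_iff_ne_zero.mpr h))]

lemma blkF_apply_same' {i : Fin (r+1)} {v : Idx r n} (h : v.1 = i) :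
    blkF n l i v = l v.1 v.2 := by
  obtain ⟨v1, v2⟩ := v
  dsimp at h
  subst h
  exact blkF_apply_same v1 v2

lemma X_dvd_mono_x (hl : ∀ i j, 0 < l i j) (x : Idx r n) :
    (X x : MvPolynomial (Idx r n) 𝕂) ∣ mono 𝕂 r n l x.1 := by
  rw [mono_eq_monomial]
  apply X_dvd_monomial''
  rw [blkF_apply_same' rfl]
  exact (hl x.1 x.2).ne'

lemma step_mem (hr : 1 ≤ r)
    (ha : ∀ i k : Fin (r+1), i ≠ k → LinearIndependent 𝕂 ![a i, a k])
    (hl : ∀ i j, 0 < l i j) (x : Idx r n) (k j : Fin (r+1)) :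
    C (alpha 𝕂 r a x.1 j) * mono 𝕂 r n l k - C (alpha 𝕂 r a x.1 k) * mono 𝕂 r n l j
      ∈ relIdeal 𝕂 r a n l ⊔ Ideal.span {X x} := by
  have hminus : (C (alpha 𝕂 r a x.1 j) + C (alpha 𝕂 r a j x.1) : MvPolynomial (Idx r n) 𝕂)
      = 0 := by
    rw [← map_add]
    have : alpha 𝕂 r a x.1 j + alpha 𝕂 r a j x.1 = 0 := by simp only [alpha]; ring
    rw [this, map_zero]
  have key : C (alpha 𝕂 r a x.1 j) * mono 𝕂 r n l k - C (alpha 𝕂 r a x.1 k) * mono 𝕂 r n l j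
      = C (alpha 𝕂 r a k j) * mono 𝕂 r n l x.1 - gPoly 𝕂 r a n l x.1 k j := by
    simp only [gPoly]
    linear_combination (mono 𝕂 r n l k) * hminus
  rw [key]
  apply sub_mem
  · exact Ideal.mem_sup_right (Ideal.mem_span_singleton.mpr
      ((X_dvd_mono_x hl x).mul_left _))
  · exact Ideal.mem_sup_left (g_mem hr ha _ _ _)

lemma eval_monomial_mul (t : Idx r n → 𝕂) (μ ν : Idx r n →₀ ℕ) :
    eval t (monomial (μ + ν) (1 : 𝕂)) = eval t (monomial μ 1) * eval t (monomial ν 1) := by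
  rw [show (monomial (μ + ν) (1:𝕂) : MvPolynomial (Idx r n) 𝕂)
    = monomial μ 1 * monomial ν 1 from by rw [monomial_mul, one_mul], map_mul]

lemma eval_monomial_ne_zero (t : Idx r n → 𝕂) (x : Idx r n) (htn : ∀ v, v ≠ x → t v ≠ 0)
    {μ : Idx r n →₀ ℕ} (hμ : μ x = 0) : eval t (monomial μ 1) ≠ 0 := by
  rw [eval_monomial, one_mul, Finsupp.prod]
  apply Finset.prod_ne_zero_iff.mpr
  intro v hv
  apply pow_ne_zero
  apply htn
  intro he
  rw [he] at hv
  exact (Finsupp.mem_support_iff.mp hv) hμ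

lemma chain (hr : 1 ≤ r) (hn : ∀ i, 0 < n i) (hl : ∀ i j, 0 < l i j)
    (ha : ∀ i k : Fin (r+1), i ≠ k → LinearIndependent 𝕂 ![a i, a k])
    (x : Idx r n) (t : Idx r n → 𝕂)
    (hts : ∀ i, eval t (mono 𝕂 r n l i) = alpha 𝕂 r a x.1 i)
    (htn : ∀ v, v ≠ x → t v ≠ 0) :
    ∀ N : ℕ, ∀ m : Fin (r+1) → ℤ, ∀ μ ν : Idx r n →₀ ℕ,
      (∑ k, (m k).toNat) = N → (∑ k, m k) = 0 → m x.1 = 0 → μ x = 0 → ν x = 0 →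
      (∀ v : Idx r n, (μ v : ℤ) - ν v = m v.1 * l v.1 v.2) →
      C (eval t (monomial ν 1)) * monomial μ 1 - C (eval t (monomial μ 1)) * monomial ν 1
        ∈ relIdeal 𝕂 r a n l ⊔ Ideal.span {X x} := by
  intro N
  induction N with
  | zero =>
    intro m μ ν hN hsum hx0 hμx hνx hdiff
    have hz : ∀ k, (m k).toNat = 0 := fun k =>
      Finset.sum_eq_zero_iff.mp hN k (Finset.mem_univ k)
    have hmz : ∀ k, m k = 0 := by
      intro k
      exact (Finset.sum_eq_zero_iff_of_nonpos (fun i _ => by have := hz i; omega)).mp hsum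
        k (Finset.mem_univ k)
    have hμν : μ = ν := by
      ext v
      have h1 := hdiff v
      rw [hmz v.1] at h1
      omega
    rw [hμν, sub_self]
    exact zero_mem _
  | succ N ih =>
    intro m μ ν hN hsum hx0 hμx hνx hdiff
    have hk : ∃ k, 0 < m k := by
      by_contra h
      push_neg at h
      have h1 : ∀ k ∈ Finset.univ, (m k).toNat = 0 := fun k _ => by have := h k; omega
      rw [Finset.sum_eq_zero h1] at hN
      exact Nat.succ_ne_zero N hN.symm
    obtain ⟨k, hk⟩ := hk
    have hj : ∃ j, m j < 0 := by
      by_contra h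
      push_neg at h
      have h1 : m k ≤ ∑ i, m i := Finset.single_le_sum (fun i _ => h i) (Finset.mem_univ k)
      rw [hsum] at h1
      omega
    obtain ⟨j, hj⟩ := hj
    have hkj : k ≠ j := fun he => by rw [he] at hk; omega
    have hkx : k ≠ x.1 := fun he => by rw [he, hx0] at hk; omega
    have hjx : j ≠ x.1 := fun he => by rw [he, hx0] at hj; omega
    have hble : blkF n l k ≤ μ := by
      rw [Finsupp.le_def]
      intro v
      by_cases hv : v.1 = k
      · have h1 := hdiff v
        have hmv : m v.fst = m k := by rw [hv]
        rw [hmv] at h1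
        have h2 : blkF n l k v = l v.1 v.2 := blkF_apply_same' hv
        rw [h2]
        have h3 : (l v.1 v.2 : ℤ) ≤ m k * l v.1 v.2 :=
          le_mul_of_one_le_left (by positivity) (by omega)
        omega
      · rw [blkF_apply_ne hv]
        exact Nat.zero_le _
    have hblep : ∀ v, blkF n l k v ≤ μ v := Finsupp.le_def.mp hble
    set τ := μ - blkF n l k with hτ
    have hμτ : μ = τ + blkF n l k := (tsub_add_cancel_of_le hble).symm
    set μ' := τ + blkF n l j with hμ'def
    have hμ'v : ∀ v, (μ' v : ℤ) = (μ v : ℤ) - blkF n l k v + blkF n l j v := by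
      intro v
      rw [hμ'def, Finsupp.add_apply, hτ, Finsupp.tsub_apply, Nat.cast_add,
        Nat.cast_sub (hblep v)]
    set m' : Fin (r+1) → ℤ :=
      fun i => m i - (if i = k then 1 else 0) + (if i = j then 1 else 0) with hm'def
    have hm'k : m' k = m k - 1 := by simp [hm'def, hkj]
    have hm'j : m' j = m j + 1 := by simp [hm'def, Ne.symm hkj]
    have hm'other : ∀ i, i ≠ k → i ≠ j → m' i = m i := by
      intro i h1 h2
      simp [hm'def, h1, h2]
    have hsum' : (∑ i, m' i) = 0 := by
      rw [hm'def]
      rw [Finset.sum_add_distrib, Finset.sum_sub_distrib]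
      simp [Finset.sum_ite_eq', hsum]
    have hx0' : m' x.1 = 0 := by
      rw [hm'other x.1 (Ne.symm hkx) (Ne.symm hjx), hx0]
    have hN' : (∑ i, (m' i).toNat) = N := by
      have e1 := (Finset.add_sum_erase Finset.univ (fun i => (m' i).toNat)
        (Finset.mem_univ k)).symm
      have e2 := (Finset.add_sum_erase Finset.univ (fun i => (m i).toNat)
        (Finset.mem_univ k)).symm
      have e3 : (∑ i ∈ Finset.univ.erase k, (m' i).toNat)
          = ∑ i ∈ Finset.univ.erase k, (m i).toNat := by
        apply Finset.sum_congr rfl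
        intro i hi
        have hik : i ≠ k := Finset.ne_of_mem_erase hi
        by_cases hij : i = j
        · subst hij
          rw [hm'j]
          omega
        · rw [hm'other i hik hij]
      rw [e2] at hN
      rw [e1, e3, hm'k]
      omega
    have hμ'x : μ' x = 0 := by
      have h1 : blkF n l j x = 0 := blkF_apply_ne (fun h => hjx h.symm)
      have h2 : blkF n l k x = 0 := blkF_apply_ne (fun h => hkx h.symm)
      have h3 := hμ'v x
      omega
    have hdiff' : ∀ v : Idx r n, (μ' v : ℤ) - ν v = m' v.1 * l v.1 v.2 := by
      intro v
      rw [hμ'v v]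
      have hd := hdiff v
      by_cases hv1 : v.1 = k
      · rw [blkF_apply_same' hv1, blkF_apply_ne (by rw [hv1]; exact hkj)]
        have hmv : m v.fst = m k := by rw [hv1]
        have hm'v : m' v.fst = m k - 1 := by rw [hv1, hm'k]
        rw [hmv] at hd
        rw [hm'v]
        push_cast
        linear_combination hd
      · by_cases hv2 : v.1 = j
        · rw [blkF_apply_same' hv2, blkF_apply_ne (by rw [hv2]; exact Ne.symm hkj)]
          have hmv : m v.fst = m j := by rw [hv2]
          have hm'v : m' v.fst = m j + 1 := by rw [hv2, hm'j]
          rw [hmv] at hd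
          rw [hm'v]
          push_cast
          linear_combination hd
        · rw [blkF_apply_ne hv1, blkF_apply_ne hv2, hm'other v.1 hv1 hv2]
          push_cast
          linear_combination hd
    have e3 : monomial μ (1:𝕂) = monomial τ 1 * mono 𝕂 r n l k := by
      rw [mono_eq_monomial, monomial_mul, one_mul, ← hμτ]
    have e4 : monomial μ' (1:𝕂) = monomial τ 1 * mono 𝕂 r n l j := by
      rw [mono_eq_monomial, monomial_mul, one_mul, ← hμ'def]
    have hvk : eval t (monomial μ (1:𝕂)) = eval t (monomial τ 1) * alpha 𝕂 r a x.1 k := by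
      rw [e3, map_mul, hts]
    have hvj : eval t (monomial μ' (1:𝕂)) = eval t (monomial τ 1) * alpha 𝕂 r a x.1 j := by
      rw [e4, map_mul, hts]
    have hstep : C (eval t (monomial μ' 1)) * monomial μ 1
        - C (eval t (monomial μ 1)) * monomial μ' 1
        ∈ relIdeal 𝕂 r a n l ⊔ Ideal.span {X x} := by
      have hrw : C (eval t (monomial μ' 1)) * monomial μ 1
          - C (eval t (monomial μ 1)) * monomial μ' 1
          = (C (eval t (monomial τ 1)) * monomial τ 1) *
            (C (alpha 𝕂 r a x.1 j) * mono 𝕂 r n l k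
              - C (alpha 𝕂 r a x.1 k) * mono 𝕂 r n l j) := by
        rw [hvk, hvj, e3, e4, map_mul, map_mul]
        ring
      rw [hrw]
      exact Ideal.mul_mem_left _ _ (step_mem hr ha hl x k j)
    have hIH := ih m' μ' ν hN' hsum' hx0' hμ'x hνx hdiff'
    have htpne : eval t (monomial μ' (1:𝕂)) ≠ 0 := eval_monomial_ne_zero t x htn hμ'x
    apply mem_of_C_mul htpne
    have hfin : C (eval t (monomial μ' 1)) *
        (C (eval t (monomial ν 1)) * monomial μ 1 - C (eval t (monomial μ 1)) * monomial ν 1)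
        = C (eval t (monomial ν 1)) *
            (C (eval t (monomial μ' 1)) * monomial μ 1
              - C (eval t (monomial μ 1)) * monomial μ' 1)
          + C (eval t (monomial μ 1)) *
            (C (eval t (monomial ν 1)) * monomial μ' 1
              - C (eval t (monomial μ' 1)) * monomial ν 1) := by
      ring
    rw [hfin]
    exact add_mem (Ideal.mul_mem_left _ _ hstep) (Ideal.mul_mem_left _ _ hIH)

end Aux5
section Aux6

set_option linter.unusedSectionVars false

variable {𝕂 : Type} [Field 𝕂] [IsAlgClosed 𝕂] [CharZero 𝕂]
variable {r : ℕ} {a : Fin (r+1) → 𝕂 × 𝕂} {n : Fin (r+1) → ℕ}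
variable {l : ∀ i : Fin (r+1), Fin (n i) → ℕ}

lemma transport (hr : 1 ≤ r) (hn : ∀ i, 0 < n i) (hl : ∀ i j, 0 < l i j)
    (ha : ∀ i k : Fin (r+1), i ≠ k → LinearIndependent 𝕂 ![a i, a k])
    (x : Idx r n) (t : Idx r n → 𝕂)
    (hts : ∀ i, eval t (mono 𝕂 r n l i) = alpha 𝕂 r a x.1 i)
    (htn : ∀ v, v ≠ x → t v ≠ 0) {μ ν : Idx r n →₀ ℕ} (hμx : μ x = 0) (hνx : ν x = 0)
    (hdeg : Finsupp.weight (wK r n l) μ = Finsupp.weight (wK r n l) ν) :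
    C (eval t (monomial ν 1)) * monomial μ 1 - C (eval t (monomial μ 1)) * monomial ν 1
      ∈ relIdeal 𝕂 r a n l ⊔ Ideal.span {X x} := by
  obtain ⟨m, hsum, hdiff⟩ := exists_m hdeg
  have hx0 : m x.1 = 0 := by
    have h1 := hdiff x
    rw [hμx, hνx] at h1
    have h2 : m x.1 * (l x.1 x.2 : ℤ) = 0 := by omega
    rcases mul_eq_zero.mp h2 with h3 | h3
    · exact h3
    · exact absurd h3 (by exact_mod_cast (hl x.1 x.2).ne')
  exact chain hr hn hl ha x t hts htn _ m μ ν rfl hsum hx0 hμx hνx hdiff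

lemma mem_span_X_of_support {x : Idx r n} {p : MvPolynomial (Idx r n) 𝕂}
    (h : ∀ μ ∈ p.support, μ x ≠ 0) : p ∈ Ideal.span {(X x : MvPolynomial (Idx r n) 𝕂)} := by
  rw [p.as_sum]
  apply Submodule.sum_mem
  intro μ hμ
  exact Ideal.mem_span_singleton.mpr (X_dvd_monomial'' (h μ hμ) _)

lemma mem_Ix_iff_dvd (x : Idx r n) (p : MvPolynomial (Idx r n) 𝕂) :
    p ∈ relIdeal 𝕂 r a n l ⊔ Ideal.span {X x} ↔
      (Ideal.Quotient.mk (relIdeal 𝕂 r a n l) (X x)) ∣ Ideal.Quotient.mk (relIdeal 𝕂 r a n l) p := by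
  constructor
  · intro h
    rw [Submodule.mem_sup] at h
    obtain ⟨u, hu, v, hv, huv⟩ := h
    obtain ⟨h2, hh⟩ := Ideal.mem_span_singleton'.mp hv
    refine ⟨Ideal.Quotient.mk _ h2, ?_⟩
    have hpv : Ideal.Quotient.mk (relIdeal 𝕂 r a n l) p = Ideal.Quotient.mk (relIdeal 𝕂 r a n l) v := by
      rw [Ideal.Quotient.eq, ← huv]
      simpa using hu
    rw [hpv, ← hh, map_mul, mul_comm]
  · rintro ⟨w, hw⟩
    obtain ⟨h2, rfl⟩ := Ideal.Quotient.mk_surjective w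
    rw [← map_mul] at hw
    have h3 : p - X x * h2 ∈ relIdeal 𝕂 r a n l := Ideal.Quotient.eq.mp hw
    have h4 : p = (p - X x * h2) + X x * h2 := by ring
    rw [h4]
    exact add_mem (Ideal.mem_sup_left h3)
      (Ideal.mem_sup_right (Ideal.mem_span_singleton.mpr (dvd_mul_right _ _)))

lemma Ix_kill {x : Idx r n} {t : Idx r n → 𝕂} (htx : t x = 0)
    (hkill : ∀ p ∈ relIdeal 𝕂 r a n l, eval t p = 0) {q : MvPolynomial (Idx r n) 𝕂}
    (hq : q ∈ relIdeal 𝕂 r a n l ⊔ Ideal.span {X x}) : eval t q = 0 := by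
  rw [Submodule.mem_sup] at hq
  obtain ⟨u, hu, v, hv, huv⟩ := hq
  obtain ⟨h2, hh⟩ := Ideal.mem_span_singleton'.mp hv
  rw [← huv, map_add, hkill u hu, ← hh, map_mul]
  simp [htx]

lemma key_decomp (hr : 1 ≤ r) (hn : ∀ i, 0 < n i) (hl : ∀ i j, 0 < l i j)
    (ha : ∀ i k : Fin (r+1), i ≠ k → LinearIndependent 𝕂 ![a i, a k])
    (x : Idx r n) (t : Idx r n → 𝕂)
    (hts : ∀ i, eval t (mono 𝕂 r n l i) = alpha 𝕂 r a x.1 i) (htx : t x = 0)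
    (htn : ∀ v, v ≠ x → t v ≠ 0) {p : MvPolynomial (Idx r n) 𝕂} {d : Kgrp r n l}
    (hp : p.IsWeightedHomogeneous (wK r n l) d) {μ₀ : Idx r n →₀ ℕ}
    (hμ₀ : μ₀ ∈ p.support) (hμ₀x : μ₀ x = 0) :
    C (eval t (monomial μ₀ 1)) * p - C (eval t p) * monomial μ₀ 1
      ∈ relIdeal 𝕂 r a n l ⊔ Ideal.span {X x} := by
  have heval : eval t p = ∑ μ ∈ p.support, coeff μ p * eval t (monomial μ 1) := by
    conv_lhs => rw [p.as_sum]
    rw [map_sum]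
    apply Finset.sum_congr rfl
    intro μ _
    rw [eval_monomial, eval_monomial, one_mul]
  have hrw : C (eval t (monomial μ₀ 1)) * p - C (eval t p) * monomial μ₀ 1
      = ∑ μ ∈ p.support, C (coeff μ p) *
          (C (eval t (monomial μ₀ 1)) * monomial μ 1
            - C (eval t (monomial μ 1)) * monomial μ₀ 1) := by
    rw [heval]
    rw [show (C (eval t (monomial μ₀ 1)) : MvPolynomial (Idx r n) 𝕂) * p
      = ∑ μ ∈ p.support, C (eval t (monomial μ₀ 1)) * monomial μ (coeff μ p) from by
        rw [← Finset.mul_sum, ← p.as_sum]]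
    rw [map_sum, Finset.sum_mul, ← Finset.sum_sub_distrib]
    apply Finset.sum_congr rfl
    intro μ _
    rw [show (monomial μ (coeff μ p) : MvPolynomial (Idx r n) 𝕂)
      = C (coeff μ p) * monomial μ 1 from by rw [C_mul_monomial, mul_one], map_mul]
    ring
  rw [hrw]
  apply Submodule.sum_mem
  intro μ hμ
  by_cases hx : μ x = 0
  · apply Ideal.mul_mem_left
    apply transport hr hn hl ha x t hts htn hx hμ₀x
    rw [hp (mem_support_iff.mp hμ), hp (mem_support_iff.mp hμ₀)]
  · have h1 : eval t (monomial μ (1:𝕂)) = 0 := by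
      rw [eval_monomial, one_mul, Finsupp.prod]
      apply Finset.prod_eq_zero (Finsupp.mem_support_iff.mpr hx)
      rw [htx, zero_pow hx]
    rw [h1, map_zero, zero_mul, sub_zero]
    have h2 : (X x : MvPolynomial (Idx r n) 𝕂) ∣ monomial μ 1 := X_dvd_monomial'' hx 1
    exact Ideal.mem_sup_right (Ideal.mem_span_singleton.mpr
      ((h2.mul_left _).mul_left _))

end Aux6

section Statement10

/-- The classes of the variables `T_{ij}` in `R(A,𝔫,L)` are `K`-prime, and for
`(i,j) ≠ (k,l)` the classes of `T_{ij}` and `T_{kl}` are not associated. -/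
theorem statement10 (𝕂 : Type) [Field 𝕂] [IsAlgClosed 𝕂] [CharZero 𝕂]
    (r : ℕ) (hr : 1 ≤ r) (a : Fin (r+1) → 𝕂 × 𝕂)
    (ha : ∀ i k : Fin (r+1), i ≠ k → LinearIndependent 𝕂 ![a i, a k])
    (n : Fin (r+1) → ℕ) (hn : ∀ i, 0 < n i)
    (l : ∀ i : Fin (r+1), Fin (n i) → ℕ) (hl : ∀ i j, 0 < l i j) :
    (∀ x : Idx r n, KPrime 𝕂 r a n l (Ideal.Quotient.mk (relIdeal 𝕂 r a n l) (X x))) ∧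
    (∀ x y : Idx r n, x ≠ y →
      ¬ Associated (Ideal.Quotient.mk (relIdeal 𝕂 r a n l) (X x))
        (Ideal.Quotient.mk (relIdeal 𝕂 r a n l) (X y))) := by
  constructor
  · intro x
    obtain ⟨t, hts, htx, htn, hkill⟩ := exists_degenerate_point hn hl ha x
    obtain ⟨t', htn', hkill'⟩ := exists_global_point hr hn hl ha (l := l)
    refine ⟨⟨wK r n l x, X x, isWeightedHomogeneous_X _ _ _, rfl⟩, ?_, ?_, ?_⟩
    · intro h0
      rw [Ideal.Quotient.eq_zero_iff_mem] at h0
      have := hkill' _ h0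
      rw [eval_X] at this
      exact htn' x this
    · intro hu
      obtain ⟨w, hw⟩ := hu.exists_right_inv
      obtain ⟨q, rfl⟩ := Ideal.Quotient.mk_surjective w
      rw [← map_mul, show (1 : RAnL 𝕂 r a n l) = Ideal.Quotient.mk (relIdeal 𝕂 r a n l) 1
        from (map_one _).symm] at hw
      have h1 : X x * q - 1 ∈ relIdeal 𝕂 r a n l := Ideal.Quotient.eq.mp hw
      have h2 := hkill _ h1
      rw [map_sub, map_mul, eval_X, htx, zero_mul, map_one, zero_sub] at h2
      exact one_ne_zero (neg_eq_zero.mp h2)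
    · rintro y z ⟨dy, py, hpy, hpyeq⟩ ⟨dz, pz, hpz, hpzeq⟩ hdvd
      have hpq : py * pz ∈ relIdeal 𝕂 r a n l ⊔ Ideal.span {X x} := by
        apply (mem_Ix_iff_dvd x _).mpr
        rw [map_mul, hpyeq, hpzeq]
        exact hdvd
      by_cases hyfree : ∃ μ₀ ∈ py.support, μ₀ x = 0
      case neg =>
        left
        rw [← hpyeq]
        apply (mem_Ix_iff_dvd x py).mp
        push_neg at hyfree
        exact Ideal.mem_sup_right (mem_span_X_of_support hyfree)
      case pos =>
      by_cases hzfree : ∃ ν₀ ∈ pz.support, ν₀ x = 0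
      case neg =>
        right
        rw [← hpzeq]
        apply (mem_Ix_iff_dvd x pz).mp
        push_neg at hzfree
        exact Ideal.mem_sup_right (mem_span_X_of_support hzfree)
      case pos =>
      obtain ⟨μ₀, hμ₀, hμ₀x⟩ := hyfree
      obtain ⟨ν₀, hν₀, hν₀x⟩ := hzfree
      have hA := key_decomp hr hn hl ha x t hts htx htn hpy hμ₀ hμ₀x
      have hB := key_decomp hr hn hl ha x t hts htx htn hpz hν₀ hν₀x
      have hABmem : C (eval t py) * C (eval t pz) * monomial (μ₀ + ν₀) (1:𝕂)
          ∈ relIdeal 𝕂 r a n l ⊔ Ideal.span {X x} := by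
        have hid : C (eval t py) * C (eval t pz) * monomial (μ₀ + ν₀) (1:𝕂)
            = C (eval t (monomial μ₀ 1)) * C (eval t (monomial ν₀ 1)) * (py * pz)
              - (C (eval t (monomial μ₀ 1)) * py) *
                  (C (eval t (monomial ν₀ 1)) * pz - C (eval t pz) * monomial ν₀ 1)
              - (C (eval t (monomial ν₀ 1)) * pz) *
                  (C (eval t (monomial μ₀ 1)) * py - C (eval t py) * monomial μ₀ 1)
              + (C (eval t (monomial μ₀ 1)) * py - C (eval t py) * monomial μ₀ 1) *
                  (C (eval t (monomial ν₀ 1)) * pz - C (eval t pz) * monomial ν₀ 1) := by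
          rw [show (monomial (μ₀ + ν₀) (1:𝕂) : MvPolynomial (Idx r n) 𝕂)
            = monomial μ₀ 1 * monomial ν₀ 1 from by rw [monomial_mul, one_mul]]
          ring
        rw [hid]
        exact add_mem (sub_mem (sub_mem (Ideal.mul_mem_left _ _ hpq)
          (Ideal.mul_mem_left _ _ hB)) (Ideal.mul_mem_left _ _ hA))
          (Ideal.mul_mem_left _ _ hB)
      have hev := Ix_kill htx hkill hABmem
      rw [map_mul, map_mul, eval_C, eval_C] at hev
      have haddx : (μ₀ + ν₀) x = 0 := by
        rw [Finsupp.add_apply, hμ₀x, hν₀x]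
      have htpne := eval_monomial_ne_zero t x htn haddx
      have hyz0 : eval t py = 0 ∨ eval t pz = 0 := by
        rcases mul_eq_zero.mp hev with h | h
        · exact mul_eq_zero.mp h
        · exact absurd h htpne
      rcases hyz0 with h0 | h0
      · left
        rw [← hpyeq]
        apply (mem_Ix_iff_dvd x py).mp
        apply mem_of_C_mul (eval_monomial_ne_zero t x htn hμ₀x)
        have hrw : C (eval t (monomial μ₀ 1)) * py
            = (C (eval t (monomial μ₀ 1)) * py - C (eval t py) * monomial μ₀ 1)
              + C (eval t py) * monomial μ₀ 1 := by ring
        rw [hrw]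
        refine add_mem hA ?_
        rw [h0, map_zero, zero_mul]
        exact zero_mem _
      · right
        rw [← hpzeq]
        apply (mem_Ix_iff_dvd x pz).mp
        apply mem_of_C_mul (eval_monomial_ne_zero t x htn hν₀x)
        have hrw : C (eval t (monomial ν₀ 1)) * pz
            = (C (eval t (monomial ν₀ 1)) * pz - C (eval t pz) * monomial ν₀ 1)
              + C (eval t pz) * monomial ν₀ 1 := by ring
        rw [hrw]
        refine add_mem hB ?_
        rw [h0, map_zero, zero_mul]
        exact zero_mem _
  · intro x y hxy hassoc
    obtain ⟨t, hts, htx, htn, hkill⟩ := exists_degenerate_point hn hl ha x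
    have hdvd : Ideal.Quotient.mk (relIdeal 𝕂 r a n l) (X x)
        ∣ Ideal.Quotient.mk (relIdeal 𝕂 r a n l) (X y) := hassoc.dvd
    have hmem := (mem_Ix_iff_dvd x (X y)).mpr hdvd
    have h0 := Ix_kill htx hkill hmem
    rw [eval_X] at h0
    exact htn y (Ne.symm hxy) h0


end Statement10
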